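/- Let L be a finite type of value-locations with |L| = C + X, and let f : L → α be the content function. Suppose there is a finite subset V of L with |V| = C on which f is injective (the C distinct stored values). Then for every finite subset U of L with |U| = 2X + t, at least t locations l ∈ U store a unique value, i.e., the set {l ∈ U | ∀ l' : L, f l' = f l → l' = l} has cardinality at least t. (This is Lemma 5 of the paper: among each 2X + t ≤ C + X value-locations there are at least t in which a unique value is stored.) -/

import Mathlib

/-- Lemma 5 of the paper: if the memory consists of `C + X` value-locations and
`C` of them (the set `V`) hold pairwise distinct values, then among any
`2X + t` value-locations `U` at least `t` store a value that occurs nowhere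
else in memory. -/
theorem unique_locations_lower_bound
    {L α : Type*} [Fintype L] (C X t : ℕ) (f : L → α)
    (hL : Fintype.card L = C + X)
    (V : Finset L) (hV : V.card = C) (hinj : Set.InjOn f (V : Set L))
    (U : Finset L) (hU : U.card = 2 * X + t) :
    t ≤ {l : L | l ∈ U ∧ ∀ l' : L, f l' = f l → l' = l}.ncard := by
  classical
  -- the set of non-unique locations
  set B : Finset L := Finset.univ.filter (fun l => ∃ l', f l' = f l ∧ l' ≠ l) with hB
  -- card of complement of V
  have hVc : (Finset.univ \ V).card = X := by
    rw [Finset.card_sdiff_of_subset (Finset.subset_univ V), Finset.card_univ, hL, hV]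
    omega
  -- B ∩ V injects into B \ V
  have hBV : (B ∩ V).card ≤ (B \ V).card := by
    have : ∀ l ∈ B ∩ V, ∃ l', f l' = f l ∧ l' ≠ l := by
      intro l hl
      have := Finset.mem_inter.1 hl
      simpa [hB] using this.1
    choose g hg hgne using this
    apply Finset.card_le_card_of_injOn (fun l => if h : l ∈ B ∩ V then g l h else l)
    · intro l hl
      simp only [Finset.mem_coe.1 hl, dif_pos, Finset.mem_coe]
      have hlV := (Finset.mem_inter.1 hl).2
      refine Finset.mem_sdiff.2 ⟨?_, ?_⟩
      · simp only [hB, Finset.mem_filter, Finset.mem_univ, true_and]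
        exact ⟨l, (hg l hl).symm, Ne.symm (hgne l hl)⟩
      · intro hgV
        exact hgne l hl (hinj hgV hlV (hg l hl))
    · intro l1 h1 l2 h2 heq
      have h1' : l1 ∈ B ∩ V := Finset.mem_coe.1 h1
      have h2' : l2 ∈ B ∩ V := Finset.mem_coe.1 h2
      simp only [h1', h2', dif_pos] at heq
      have hf : f l1 = f l2 := by
        rw [← hg l1 h1', ← hg l2 h2', heq]
      exact hinj (Finset.mem_inter.1 h1').2 (Finset.mem_inter.1 h2').2 hf
  have hBVc : (B \ V).card ≤ X := by
    rw [← hVc]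
    exact Finset.card_le_card (fun l hl => Finset.mem_sdiff.2
      ⟨Finset.mem_univ l, (Finset.mem_sdiff.1 hl).2⟩)
  have hBcard : B.card ≤ 2 * X := by
    have := Finset.card_inter_add_card_sdiff B V
    omega
  -- rewrite goal as a filter
  have hset : {l : L | l ∈ U ∧ ∀ l' : L, f l' = f l → l' = l} =
      ↑(U.filter (fun l => ∀ l' : L, f l' = f l → l' = l)) := by
    ext l; simp
  rw [hset, Set.ncard_coe_finset]
  have hsplit := Finset.card_filter_add_card_filter_not
    (s := U) (p := fun l => ∀ l' : L, f l' = f l → l' = l)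
  have hsub : U.filter (fun l => ¬ ∀ l' : L, f l' = f l → l' = l) ⊆ B := by
    intro l hl
    have := (Finset.mem_filter.1 hl).2
    push_neg at this
    obtain ⟨l', hfl, hne⟩ := this
    simp only [hB, Finset.mem_filter, Finset.mem_univ, true_and]
    exact ⟨l', hfl, hne⟩
  have := Finset.card_le_card hsub
  omega
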